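/- Uniqueness under a span condition on the dual scalings: let (M_1*,…,M_T*) be a feasible tuple with aggregate M̄* = Σ_t M_t*, and suppose there exist entrywise strictly positive vectors u_t, v_t ∈ ℝ^n, t = 1,…,T, such that (i) M_t*(i,j) = M̄*(i,j)·u_t(i)·v_t(j) for all t and all (i,j), and (ii) Σ_{t=1}^T u_t(i)·v_t(j) ≤ 1 for all (i,j). If in addition span{u_1,…,u_T} = ℝ^n or span{v_1,…,v_T} = ℝ^n, then (M_1*,…,M_T*) is the unique global minimizer of J over the feasible set: every feasible tuple (N_1,…,N_T) with J(N_1,…,N_T) = J(M_1*,…,M_T*) satisfies N_t = M_t* for all t. -/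

import Mathlib

/-- Kullback–Leibler divergence between two matrices, with the convention that
entries with `P i j = 0` contribute `0`.  (On the feasible set one has
`M t ≤ M̄` entrywise, so the divergence is finite and this real-valued
definition agrees with the extended-real one.) -/
noncomputable def klMat {n : ℕ} (P Q : Matrix (Fin n) (Fin n) ℝ) : ℝ :=
  ∑ i, ∑ j, (if P i j = 0 then 0 else P i j * Real.log (P i j / Q i j))

/-- Feasibility: nonnegative matrices with prescribed row and column marginals. -/
def Feasible {n T : ℕ} (μ ν : Fin T → Fin n → ℝ)
    (M : Fin T → Matrix (Fin n) (Fin n) ℝ) : Prop :=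
  (∀ t i j, 0 ≤ M t i j) ∧ (∀ t i, ∑ j, M t i j = μ t i) ∧ (∀ t j, ∑ i, M t i j = ν t j)

/-- The objective `J(M₁,…,M_T) = Σ_t D(M_t | Σ_s M_s)`. -/
noncomputable def J {n T : ℕ} (M : Fin T → Matrix (Fin n) (Fin n) ℝ) : ℝ :=
  ∑ t, klMat (M t) (∑ s, M s)

noncomputable def Kterm (p q : ℝ) : ℝ := if p = 0 then 0 else p * Real.log (p / q)

lemma Kterm_self (p : ℝ) : Kterm p p = 0 := by
  by_cases h : p = 0 <;> simp [Kterm, h, div_self]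

lemma Kterm_ge (p q : ℝ) (hp : 0 ≤ p) (hq : 0 ≤ q) (h : p ≠ 0 → 0 < q) :
    p - q ≤ Kterm p q := by
  by_cases h0 : p = 0
  · simp [Kterm, h0]; linarith
  · have hp' : 0 < p := hp.lt_of_ne' h0
    have hq' : 0 < q := h h0
    have hl : Real.log (q / p) ≤ q / p - 1 := Real.log_le_sub_one_of_pos (by positivity)
    have hlog : Real.log (p / q) = - Real.log (q / p) := by
      rw [← Real.log_inv]; congr 1; field_simp
    simp only [Kterm, if_neg h0]
    rw [hlog]
    have h2 : p * Real.log (q / p) ≤ q - p := by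
      have := mul_le_mul_of_nonneg_left hl hp
      calc p * Real.log (q/p) ≤ p * (q/p - 1) := this
        _ = q - p := by field_simp
    linarith

lemma Kterm_eq_imp (p q : ℝ) (hp : 0 ≤ p) (h : p ≠ 0 → 0 < q)
    (heq : Kterm p q = p - q) : p = q := by
  by_cases h0 : p = 0
  · simp [Kterm, h0] at heq; linarith
  · have hp' : 0 < p := hp.lt_of_ne' h0
    have hq' : 0 < q := h h0
    by_contra hne
    have hne' : q / p ≠ 1 := by
      intro hc; exact hne (by field_simp at hc; linarith)
    have hl : Real.log (q / p) < q / p - 1 := Real.log_lt_sub_one_of_pos (by positivity) hne'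
    have hlog : Real.log (p / q) = - Real.log (q / p) := by
      rw [← Real.log_inv]; congr 1; field_simp
    simp only [Kterm, if_neg h0] at heq
    rw [hlog] at heq
    have h2 : p * Real.log (q / p) < q - p := by
      have := mul_lt_mul_of_pos_left hl hp'
      calc p * Real.log (q/p) < p * (q/p - 1) := this
        _ = q - p := by field_simp
    nlinarith

lemma Kterm_split (p q a b : ℝ) (hp : 0 ≤ p) (hpq : p ≤ q) (ha : 0 < a) (hb : 0 < b) :
    Kterm p q = Kterm p (q * (a * b)) + p * (Real.log a + Real.log b) := by
  by_cases h0 : p = 0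
  · simp [Kterm, h0]
  · have hp' : 0 < p := hp.lt_of_ne' h0
    have hq : 0 < q := hp'.trans_le hpq
    simp only [Kterm, if_neg h0]
    rw [Real.log_div h0 (by positivity), Real.log_div h0 (by positivity),
        Real.log_mul (by positivity) (by positivity),
        Real.log_mul (by positivity) (by positivity)]
    ring

lemma single_le_sum_mat {n T : ℕ} (N : Fin T → Matrix (Fin n) (Fin n) ℝ)
    (hN : ∀ t i j, 0 ≤ N t i j) (t : Fin T) (i j : Fin n) :
    N t i j ≤ (∑ s, N s) i j := by
  rw [Matrix.sum_apply]
  exact Finset.single_le_sum (fun s _ => hN s i j) (Finset.mem_univ t)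

lemma J_decomp {n T : ℕ} (μ ν : Fin T → Fin n → ℝ)
    (u v : Fin T → Fin n → ℝ) (hu : ∀ t i, 0 < u t i) (hv : ∀ t j, 0 < v t j)
    (N : Fin T → Matrix (Fin n) (Fin n) ℝ) (hN : Feasible μ ν N) :
    J N = (∑ t, (∑ i, μ t i * Real.log (u t i) + ∑ j, ν t j * Real.log (v t j)))
      + ∑ t, ∑ i, ∑ j, Kterm (N t i j) ((∑ s, N s) i j * (u t i * v t j)) := by
  have hJ : J N = ∑ t, ∑ i, ∑ j, Kterm (N t i j) ((∑ s, N s) i j) := rfl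
  rw [hJ, ← Finset.sum_add_distrib]
  refine Finset.sum_congr rfl fun t _ => ?_
  have key : ∀ i j, Kterm (N t i j) ((∑ s, N s) i j)
      = Kterm (N t i j) ((∑ s, N s) i j * (u t i * v t j))
        + N t i j * (Real.log (u t i) + Real.log (v t j)) :=
    fun i j => Kterm_split _ _ _ _ (hN.1 t i j) (single_le_sum_mat N hN.1 t i j) (hu t i) (hv t j)
  have hmarg : ∑ i, ∑ j, N t i j * (Real.log (u t i) + Real.log (v t j))
      = ∑ i, μ t i * Real.log (u t i) + ∑ j, ν t j * Real.log (v t j) := by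
    have h1 : ∑ i, ∑ j, N t i j * (Real.log (u t i) + Real.log (v t j))
        = ∑ i, ∑ j, N t i j * Real.log (u t i) + ∑ i, ∑ j, N t i j * Real.log (v t j) := by
      simp_rw [mul_add, Finset.sum_add_distrib]
    rw [h1]
    congr 1
    · refine Finset.sum_congr rfl fun i _ => ?_
      rw [← Finset.sum_mul, hN.2.1 t i]
    · rw [Finset.sum_comm]
      refine Finset.sum_congr rfl fun j _ => ?_
      rw [← Finset.sum_mul, hN.2.2 t j]
  simp_rw [key, Finset.sum_add_distrib]
  rw [hmarg]
  ring

lemma span_ortho {n T : ℕ} (w : Fin n → ℝ) (v : Fin T → Fin n → ℝ)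
    (hspan : Submodule.span ℝ (Set.range v) = ⊤)
    (h : ∀ t, ∑ j, w j * v t j = 0) : w = 0 := by
  let φ : (Fin n → ℝ) →ₗ[ℝ] ℝ :=
    { toFun := fun x => ∑ j, w j * x j
      map_add' := fun x y => by simp [mul_add, Finset.sum_add_distrib]
      map_smul' := fun c x => by
        simp only [Pi.smul_apply, smul_eq_mul, RingHom.id_apply, Finset.mul_sum]
        exact Finset.sum_congr rfl fun j _ => by ring }
  have hker : Submodule.span ℝ (Set.range v) ≤ LinearMap.ker φ := by
    rw [Submodule.span_le]
    rintro _ ⟨t, rfl⟩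
    exact h t
  rw [hspan, top_le_iff] at hker
  have hφ0 : φ = 0 := LinearMap.ker_eq_top.mp hker
  have hw : ∑ j, w j * w j = 0 := by
    have := congrFun (congrArg (fun f => f.toFun) hφ0) w
    simpa [φ] using this
  funext j
  have h2 : w j * w j = 0 :=
    (Finset.sum_eq_zero_iff_of_nonneg (fun j _ => mul_self_nonneg (w j))).mp hw j (Finset.mem_univ j)
  exact mul_self_eq_zero.mp h2

lemma triple_zero {T n : ℕ} (g : Fin T → Fin n → Fin n → ℝ)
    (hg : ∀ t i j, 0 ≤ g t i j) (hsum : ∑ t, ∑ i, ∑ j, g t i j = 0) :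
    ∀ t i j, g t i j = 0 := by
  intro t i j
  have h1 := (Finset.sum_eq_zero_iff_of_nonneg (fun t _ =>
    Finset.sum_nonneg fun i _ => Finset.sum_nonneg fun j _ => hg t i j)).mp hsum t (Finset.mem_univ t)
  have h2 := (Finset.sum_eq_zero_iff_of_nonneg (fun i _ =>
    Finset.sum_nonneg fun j _ => hg t i j)).mp h1 i (Finset.mem_univ i)
  exact (Finset.sum_eq_zero_iff_of_nonneg (fun j _ => hg t i j)).mp h2 j (Finset.mem_univ j)


/-- uniqueness under a span condition on the dual scalings: if in
addition to the optimality certificate the `u_t` or the `v_t` span `ℝⁿ`, then the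
feasible tuple is the unique global minimizer of `J`. -/
theorem stmt17 (n T : ℕ) (hn : 0 < n) (hT : 0 < T)
    (μ ν : Fin T → Fin n → ℝ)
    (hμ : ∀ t i, 0 ≤ μ t i) (hν : ∀ t j, 0 ≤ ν t j)
    (hmass : ∀ t, ∑ i, μ t i = ∑ j, ν t j)
    (Mstar : Fin T → Matrix (Fin n) (Fin n) ℝ) (hfeas : Feasible μ ν Mstar)
    (u v : Fin T → Fin n → ℝ) (hu : ∀ t i, 0 < u t i) (hv : ∀ t j, 0 < v t j)
    (hscal : ∀ t i j, Mstar t i j = (∑ s, Mstar s) i j * (u t i * v t j))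
    (hdual : ∀ i j : Fin n, ∑ t, u t i * v t j ≤ 1)
    (hspan : Submodule.span ℝ (Set.range u) = ⊤ ∨ Submodule.span ℝ (Set.range v) = ⊤) :
    (∀ N, Feasible μ ν N → J Mstar ≤ J N) ∧
    (∀ N, Feasible μ ν N → J N = J Mstar → N = Mstar) := by
  set C : ℝ := ∑ t, (∑ i, μ t i * Real.log (u t i) + ∑ j, ν t j * Real.log (v t j)) with hCdef
  -- value at Mstar
  have hJM : J Mstar = C := by
    rw [J_decomp μ ν u v hu hv Mstar hfeas]
    have hz : ∀ t i j : _, Kterm (Mstar t i j) ((∑ s, Mstar s) i j * (u t i * v t j)) = 0 := by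
      intro t i j
      rw [← hscal t i j]
      exact Kterm_self _
    simp [hz]
    exact hCdef.symm
  have main : ∀ N, Feasible μ ν N →
      (J Mstar ≤ J N ∧ (J N = J Mstar → N = Mstar)) := by
    intro N hN
    have hNb_nonneg : ∀ i j, 0 ≤ (∑ s, N s) i j := by
      intro i j
      rw [Matrix.sum_apply]
      exact Finset.sum_nonneg fun s _ => hN.1 s i j
    have hpos : ∀ t (i j : Fin n), N t i j ≠ 0 → 0 < (∑ s, N s) i j * (u t i * v t j) := by
      intro t i j h0
      have h1 : 0 < N t i j := (hN.1 t i j).lt_of_ne' h0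
      have h2 : 0 < (∑ s, N s) i j := h1.trans_le (single_le_sum_mat N hN.1 t i j)
      have := hu t i; have := hv t j
      positivity
    -- pointwise nonnegative gap
    have hg : ∀ t (i j : Fin n), 0 ≤ Kterm (N t i j) ((∑ s, N s) i j * (u t i * v t j))
        - (N t i j - (∑ s, N s) i j * (u t i * v t j)) := by
      intro t i j
      have := Kterm_ge (N t i j) ((∑ s, N s) i j * (u t i * v t j)) (hN.1 t i j)
        (by have := hu t i; have := hv t j; have := hNb_nonneg i j; positivity)
        (hpos t i j)
      linarith
    -- rearranged sum of differences
    have rearr : ∑ t, ∑ i, ∑ j, (N t i j - (∑ s, N s) i j * (u t i * v t j))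
        = ∑ i, ∑ j, (∑ s, N s) i j * (1 - ∑ t, u t i * v t j) := by
      rw [Finset.sum_comm]
      refine Finset.sum_congr rfl fun i _ => ?_
      rw [Finset.sum_comm]
      refine Finset.sum_congr rfl fun j _ => ?_
      have h1 : ∑ t, N t i j = (∑ s, N s) i j := (Matrix.sum_apply i j Finset.univ N).symm
      rw [Finset.sum_sub_distrib, ← Finset.mul_sum, h1]
      ring
    have hslack : 0 ≤ ∑ i, ∑ j, (∑ s, N s) i j * (1 - ∑ t, u t i * v t j) :=
      Finset.sum_nonneg fun i _ => Finset.sum_nonneg fun j _ =>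
        mul_nonneg (hNb_nonneg i j) (by linarith [hdual i j])
    have keysum : ∑ t, ∑ i, ∑ j, Kterm (N t i j) ((∑ s, N s) i j * (u t i * v t j))
        = (∑ t, ∑ i, ∑ j, (Kterm (N t i j) ((∑ s, N s) i j * (u t i * v t j))
            - (N t i j - (∑ s, N s) i j * (u t i * v t j))))
          + ∑ i, ∑ j, (∑ s, N s) i j * (1 - ∑ t, u t i * v t j) := by
      rw [← rearr, ← Finset.sum_add_distrib]
      refine Finset.sum_congr rfl fun t _ => ?_
      rw [← Finset.sum_add_distrib]
      refine Finset.sum_congr rfl fun i _ => ?_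
      rw [← Finset.sum_add_distrib]
      exact Finset.sum_congr rfl fun j _ => by ring
    have hgsum : 0 ≤ ∑ t, ∑ i, ∑ j, (Kterm (N t i j) ((∑ s, N s) i j * (u t i * v t j))
        - (N t i j - (∑ s, N s) i j * (u t i * v t j))) :=
      Finset.sum_nonneg fun t _ => Finset.sum_nonneg fun i _ =>
        Finset.sum_nonneg fun j _ => hg t i j
    have hJN : J N = C + ∑ t, ∑ i, ∑ j, Kterm (N t i j) ((∑ s, N s) i j * (u t i * v t j)) :=
      J_decomp μ ν u v hu hv N hN
    constructor
    · rw [hJM, hJN, keysum]; linarith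
    · intro heq
      -- the total KL gap vanishes
      have h0 : ∑ t, ∑ i, ∑ j, Kterm (N t i j) ((∑ s, N s) i j * (u t i * v t j)) = 0 := by
        rw [hJM] at heq; rw [hJN] at heq; linarith
      have hgzero : ∑ t, ∑ i, ∑ j, (Kterm (N t i j) ((∑ s, N s) i j * (u t i * v t j))
          - (N t i j - (∑ s, N s) i j * (u t i * v t j))) = 0 := by
        rw [h0] at keysum; linarith
      have hptwise := triple_zero _ hg hgzero
      have hNt : ∀ t (i j : Fin n), N t i j = (∑ s, N s) i j * (u t i * v t j) := by
        intro t i j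
        refine Kterm_eq_imp _ _ (hN.1 t i j) (hpos t i j) ?_
        have := hptwise t i j
        linarith
      -- marginal identities
      have hrowN : ∀ t i, u t i * (∑ j, (∑ s, N s) i j * v t j) = μ t i := by
        intro t i
        rw [← hN.2.1 t i, Finset.mul_sum]
        exact Finset.sum_congr rfl fun j _ => by rw [hNt t i j]; ring
      have hrowM : ∀ t i, u t i * (∑ j, (∑ s, Mstar s) i j * v t j) = μ t i := by
        intro t i
        rw [← hfeas.2.1 t i, Finset.mul_sum]
        exact Finset.sum_congr rfl fun j _ => by rw [hscal t i j]; ring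
      have hcolN : ∀ t j, v t j * (∑ i, (∑ s, N s) i j * u t i) = ν t j := by
        intro t j
        rw [← hN.2.2 t j, Finset.mul_sum]
        exact Finset.sum_congr rfl fun i _ => by rw [hNt t i j]; ring
      have hcolM : ∀ t j, v t j * (∑ i, (∑ s, Mstar s) i j * u t i) = ν t j := by
        intro t j
        rw [← hfeas.2.2 t j, Finset.mul_sum]
        exact Finset.sum_congr rfl fun i _ => by rw [hscal t i j]; ring
      -- aggregates coincide
      have hagg : ∀ i j : Fin n, (∑ s, N s) i j = (∑ s, Mstar s) i j := by
        rcases hspan with hsu | hsv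
        · intro i j
          have hw : (fun i => (∑ s, N s) i j - (∑ s, Mstar s) i j) = 0 := by
            refine span_ortho _ u hsu fun t => ?_
            have h1 : ∑ i, (∑ s, N s) i j * u t i = ∑ i, (∑ s, Mstar s) i j * u t i :=
              mul_left_cancel₀ (ne_of_gt (hv t j)) (by rw [hcolN t j, hcolM t j])
            simp_rw [sub_mul]
            rw [Finset.sum_sub_distrib, h1, sub_self]
          have := congrFun hw i
          simpa [sub_eq_zero] using this
        · intro i j
          have hw : (fun j => (∑ s, N s) i j - (∑ s, Mstar s) i j) = 0 := by
            refine span_ortho _ v hsv fun t => ?_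
            have h1 : ∑ j, (∑ s, N s) i j * v t j = ∑ j, (∑ s, Mstar s) i j * v t j :=
              mul_left_cancel₀ (ne_of_gt (hu t i)) (by rw [hrowN t i, hrowM t i])
            simp_rw [sub_mul]
            rw [Finset.sum_sub_distrib, h1, sub_self]
          have := congrFun hw j
          simpa [sub_eq_zero] using this
      funext t
      ext i j
      rw [hNt t i j, hagg i j, ← hscal t i j]
  exact ⟨fun N hN => (main N hN).1, fun N hN heq => (main N hN).2 heq⟩
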